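/- For x ≥ 0 and κ > 1, the inequality κ·x·r(x,κ) ≥ 1, where r(x,κ) = (e^{1/(π(κ-1)+2)}/(2κ)) · √((κ-1)(π(κ-1)+2)·2/π²・π) · √(2π) · e^{(1-κ)x²/2}, is equivalent to x²(1-κ)·e^{x²(1-κ)} ≤ (2/(π(1-κ)-2))·e^{2/(π(1-κ)-2)}. -/

import Mathlib

open Real

noncomputable def gfun (x κ : ℝ) : ℝ :=
  (Real.exp (1 / (Real.pi * (κ - 1) + 2)) / (2 * κ)) *
    Real.sqrt ((κ - 1) * (Real.pi * (κ - 1) + 2) / Real.pi) *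
    Real.exp (-(κ * x ^ 2) / 2)

noncomputable def rfun (x κ : ℝ) : ℝ :=
  Real.sqrt (2 * Real.pi) * gfun x κ * Real.exp (x ^ 2 / 2)

theorem stmt4 (x κ : ℝ) (hx : 0 ≤ x) (hκ : 1 < κ) :
    1 ≤ κ * x * rfun x κ ↔
      x ^ 2 * (1 - κ) * Real.exp (x ^ 2 * (1 - κ)) ≤
        (2 / (Real.pi * (1 - κ) - 2)) * Real.exp (2 / (Real.pi * (1 - κ) - 2)) := by
  have hπ := Real.pi_pos
  have ha : (0:ℝ) < κ - 1 := by linarith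
  have hκ0 : (0:ℝ) < κ := by linarith
  set P := Real.pi * (κ - 1) + 2 with hPdef
  have hP : 0 < P := by rw [hPdef]; nlinarith
  have hs : Real.pi * (1 - κ) - 2 = -P := by rw [hPdef]; ring
  set t := x ^ 2 * (1 - κ) with htdef
  set E1 := Real.exp t with hE1def
  set E2 := Real.exp (2 / P) with hE2def
  have hE1 : 0 < E1 := Real.exp_pos _
  have hE2 : 0 < E2 := Real.exp_pos _
  set S := Real.sqrt (2 * ((κ - 1) * P)) with hSdef
  have hS0 : 0 ≤ S := Real.sqrt_nonneg _
  have hS2 : S ^ 2 = 2 * ((κ - 1) * P) := Real.sq_sqrt (by positivity)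
  clear_value P t E1 E2 S
  have hmul : Real.sqrt (2 * Real.pi) * Real.sqrt ((κ - 1) * P / Real.pi) = S := by
    rw [hSdef, ← Real.sqrt_mul (by positivity : (0:ℝ) ≤ 2 * Real.pi)]
    congr 1
    field_simp
  have hexp : Real.exp (1 / P) * Real.exp (-(κ * x ^ 2) / 2) * Real.exp (x ^ 2 / 2)
      = Real.exp (1 / P + t / 2) := by
    rw [← Real.exp_add, ← Real.exp_add]
    congr 1
    rw [htdef]; ring
  have hr : κ * x * rfun x κ = x * S * Real.exp (1 / P + t / 2) / 2 := by
    unfold rfun gfun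
    rw [← hPdef]
    have h0 : κ * x *
        (Real.sqrt (2 * Real.pi) *
          (Real.exp (1 / P) / (2 * κ) * Real.sqrt ((κ - 1) * P / Real.pi) *
            Real.exp (-(κ * x ^ 2) / 2)) * Real.exp (x ^ 2 / 2)) =
        x * (Real.sqrt (2 * Real.pi) * Real.sqrt ((κ - 1) * P / Real.pi)) *
          (Real.exp (1 / P) * Real.exp (-(κ * x ^ 2) / 2) * Real.exp (x ^ 2 / 2)) / 2 := by
      field_simp
    rw [h0, hmul, hexp]
  have hE : Real.exp (1 / P + t / 2) ^ 2 = E2 * E1 := by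
    rw [sq, ← Real.exp_add, hE2def, hE1def, ← Real.exp_add]
    congr 1
    field_simp
    ring
  rw [hr, hs]
  have hrhs : (2 / -P) * Real.exp (2 / -P) = -2 / (P * E2) := by
    rw [show (2:ℝ) / -P = -(2 / P) by ring, Real.exp_neg, ← hE2def]
    rw [neg_mul, ← div_eq_mul_inv, div_div, neg_div]
  rw [hrhs]
  rw [show t * E1 ≤ -2 / (P * E2) ↔ t * E1 * (P * E2) ≤ -2 from
    le_div_iff₀ (by positivity)]
  set c := x * S * Real.exp (1 / P + t / 2) / 2 with hcdef
  have hc0 : 0 ≤ c := by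
    rw [hcdef]
    exact div_nonneg (mul_nonneg (mul_nonneg hx hS0) (Real.exp_pos _).le) (by norm_num)
  have hcsq : c ^ 2 = -t * P * E2 * E1 / 2 := by
    rw [hcdef, div_pow, mul_pow, mul_pow, hS2, hE, htdef]
    ring
  clear_value c
  clear hr hrhs hmul hexp hE hs hPdef htdef hE1def hE2def hSdef hS2 hcdef hS0
  constructor
  · intro h
    have h2 : 1 ≤ c ^ 2 := by
      have := pow_le_pow_left₀ (by norm_num : (0:ℝ) ≤ 1) h 2
      simpa using this
    rw [hcsq] at h2
    nlinarith
  · intro h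
    have h2 : 1 ≤ c ^ 2 := by rw [hcsq]; nlinarith
    nlinarith [sq_nonneg (c - 1), sq_nonneg (c + 1)]
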